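/- Let H be a real Hilbert space, L > 0, and u : [0,L] → H a continuous curve with ‖u(s)‖ = 1 for all s ∈ [0,L]. Define Γ_u : H → H by Γ_u z = ∫₀ᴸ ⟪u(s), z⟫·u(s) ds (Bochner integral). Then Γ_u is a bounded self-adjoint operator satisfying 0 ≤ ⟪Γ_u z, z⟫ ≤ L·‖z‖² for all z ∈ H, and L is an eigenvalue of Γ_u (i.e. Γ_u z = L·z for some z ≠ 0) if and only if the range of u is contained in a one-dimensional subspace of H — equivalently, since u is continuous with values in the unit sphere, if and only if u is constant. -/
import Mathlib

open scoped RealInnerProductSpace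

lemma sign_const_aux {L : ℝ} {f : ℝ → ℝ}
    (hf : ContinuousOn f (Set.Icc 0 L))
    (hne : ∀ s ∈ Set.Icc (0:ℝ) L, f s ≠ 0)
    (habs : ∀ s ∈ Set.Icc (0:ℝ) L, |f s| = |f 0|) :
    ∀ s ∈ Set.Icc (0:ℝ) L, f s = f 0 := by
  intro s hs
  by_contra hne'
  have h1 : f s = - f 0 := by
    rcases abs_eq_abs.mp (habs s hs) with h | h
    · exact absurd h hne'
    · exact h
  have h0s : (0:ℝ) ≤ s := hs.1
  have hsub : Set.uIcc (0:ℝ) s ⊆ Set.Icc 0 L := by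
    rw [Set.uIcc_of_le h0s]
    exact Set.Icc_subset_Icc le_rfl hs.2
  have hC : ContinuousOn f (Set.uIcc 0 s) := hf.mono hsub
  have h0mem : (0:ℝ) ∈ Set.uIcc (f 0) (f s) := by
    rcases le_total (f 0) 0 with h | h
    · exact Set.mem_uIcc.mpr (Or.inl ⟨h, by rw [h1]; linarith⟩)
    · exact Set.mem_uIcc.mpr (Or.inr ⟨by rw [h1]; linarith, h⟩)
  obtain ⟨t, ht, hft⟩ := intermediate_value_uIcc hC h0mem
  exact hne t (hsub ht) hft

theorem snake_gram_operator_properties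
    {H : Type*} [NormedAddCommGroup H] [InnerProductSpace ℝ H] [CompleteSpace H]
    (L : ℝ) (hL : 0 < L) (u : ℝ → H)
    (hu : ContinuousOn u (Set.Icc 0 L)) (hnorm : ∀ s ∈ Set.Icc (0 : ℝ) L, ‖u s‖ = 1)
    (Γ : H → H) (hΓ : ∀ z : H, Γ z = ∫ s in (0 : ℝ)..L, ⟪u s, z⟫ • u s) :
    IsLinearMap ℝ Γ ∧
      (∃ C : ℝ, ∀ z : H, ‖Γ z‖ ≤ C * ‖z‖) ∧
      (∀ z w : H, ⟪Γ z, w⟫ = ⟪z, Γ w⟫) ∧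
      (∀ z : H, 0 ≤ ⟪Γ z, z⟫ ∧ ⟪Γ z, z⟫ ≤ L * ‖z‖ ^ 2) ∧
      ((∃ z : H, z ≠ 0 ∧ Γ z = L • z) ↔
        ∃ W : Submodule ℝ H, Module.rank ℝ W = 1 ∧ ∀ s ∈ Set.Icc (0 : ℝ) L, u s ∈ W) ∧
      ((∃ z : H, z ≠ 0 ∧ Γ z = L • z) ↔ ∀ s ∈ Set.Icc (0 : ℝ) L, u s = u 0) := by
  have h0L : (0:ℝ) ≤ L := hL.le
  have huIcc : Set.uIcc (0:ℝ) L = Set.Icc 0 L := Set.uIcc_of_le h0L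
  -- continuity/integrability of the integrand
  have hcont : ∀ z : H, ContinuousOn (fun s => ⟪u s, z⟫ • u s) (Set.Icc 0 L) :=
    fun z => ((hu.inner continuousOn_const)).smul hu
  have hInt : ∀ z : H, IntervalIntegrable (fun s => ⟪u s, z⟫ • u s) MeasureTheory.volume 0 L := by
    intro z
    apply ContinuousOn.intervalIntegrable
    rw [huIcc]; exact hcont z
  have hcontf : ∀ z : H, ContinuousOn (fun s => ⟪u s, z⟫) (Set.Icc 0 L) :=
    fun z => hu.inner continuousOn_const
  have hIntf : ∀ z w : H,
      IntervalIntegrable (fun s => ⟪u s, z⟫ * ⟪u s, w⟫) MeasureTheory.volume 0 L := by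
    intro z w
    apply ContinuousOn.intervalIntegrable
    rw [huIcc]; exact (hcontf z).mul (hcontf w)
  -- key formula for the quadratic form
  have hGzw : ∀ z w : H, ⟪Γ z, w⟫ = ∫ s in (0:ℝ)..L, ⟪u s, z⟫ * ⟪u s, w⟫ := by
    intro z w
    rw [hΓ, real_inner_comm]
    rw [show (⟪w, ∫ s in (0:ℝ)..L, ⟪u s, z⟫ • u s⟫ : ℝ)
        = innerSL ℝ w (∫ s in (0:ℝ)..L, ⟪u s, z⟫ • u s) from rfl]
    rw [← (innerSL ℝ w).intervalIntegral_comp_comm (hInt z)]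
    congr 1
    funext s
    simp [real_inner_comm (u s) w, mul_comm]
  -- linearity
  have hlin : IsLinearMap ℝ Γ := by
    constructor
    · intro a b
      rw [hΓ, hΓ, hΓ, ← intervalIntegral.integral_add (hInt a) (hInt b)]
      congr 1
      funext s
      rw [inner_add_right, add_smul]
    · intro c a
      rw [hΓ, hΓ, ← intervalIntegral.integral_smul]
      congr 1
      funext s
      rw [real_inner_smul_right, mul_smul]
  -- boundedness
  have hbdd : ∀ z : H, ‖Γ z‖ ≤ L * ‖z‖ := by
    intro z
    rw [hΓ]
    have := intervalIntegral.norm_integral_le_of_norm_le_const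
      (C := ‖z‖) (f := fun s => ⟪u s, z⟫ • u s)
      (a := 0) (b := L) ?_
    · calc ‖∫ s in (0:ℝ)..L, ⟪u s, z⟫ • u s‖ ≤ ‖z‖ * |L - 0| := this
        _ = L * ‖z‖ := by rw [sub_zero, abs_of_pos hL, mul_comm]
    · intro x hx
      rw [Set.uIoc_of_le h0L] at hx
      have hx' : x ∈ Set.Icc (0:ℝ) L := ⟨hx.1.le, hx.2⟩
      rw [norm_smul, hnorm x hx']
      calc ‖(⟪u x, z⟫ : ℝ)‖ * 1 = |⟪u x, z⟫| := by rw [mul_one]; rfl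
        _ ≤ ‖u x‖ * ‖z‖ := abs_real_inner_le_norm _ _
        _ = ‖z‖ := by rw [hnorm x hx', one_mul]
  -- symmetry
  have hsym : ∀ z w : H, ⟪Γ z, w⟫ = ⟪z, Γ w⟫ := by
    intro z w
    rw [hGzw z w, real_inner_comm (Γ w) z, hGzw w z]
    congr 1
    funext s
    ring
  -- quadratic bounds
  have hquad : ∀ z : H, 0 ≤ ⟪Γ z, z⟫ ∧ ⟪Γ z, z⟫ ≤ L * ‖z‖ ^ 2 := by
    intro z
    rw [hGzw]
    constructor
    · exact intervalIntegral.integral_nonneg h0L (fun s _ => mul_self_nonneg _)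
    · have h1 : (∫ s in (0:ℝ)..L, ⟪u s, z⟫ * ⟪u s, z⟫)
          ≤ ∫ _ in (0:ℝ)..L, ‖z‖ ^ 2 := by
        apply intervalIntegral.integral_mono_on h0L (hIntf z z) intervalIntegrable_const
        intro s hs
        have h2 := abs_real_inner_le_norm (u s) z
        rw [hnorm s hs, one_mul] at h2
        nlinarith [sq_abs (⟪u s, z⟫ : ℝ), abs_nonneg (⟪u s, z⟫ : ℝ), norm_nonneg z]
      simpa using h1
  -- eigenvalue implies constant
  have eig_to_const : (∃ z : H, z ≠ 0 ∧ Γ z = L • z) →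
      ∀ s ∈ Set.Icc (0:ℝ) L, u s = u 0 := by
    rintro ⟨z, hz, hGz⟩
    have hzpos : (0:ℝ) < ‖z‖ := norm_pos_iff.mpr hz
    have hquadz : (∫ s in (0:ℝ)..L, ⟪u s, z⟫ * ⟪u s, z⟫) = L * ‖z‖ ^ 2 := by
      rw [← hGzw, hGz, real_inner_smul_left, real_inner_self_eq_norm_sq]
    set g : ℝ → ℝ := fun s => ‖z‖ ^ 2 - ⟪u s, z⟫ * ⟪u s, z⟫ with hgdef
    have hgInt : IntervalIntegrable g MeasureTheory.volume 0 L :=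
      intervalIntegrable_const.sub (hIntf z z)
    have hgzero : (∫ s in (0:ℝ)..L, g s) = 0 := by
      rw [intervalIntegral.integral_sub intervalIntegrable_const (hIntf z z), hquadz]
      simp [mul_comm]
    have hgnonneg : 0 ≤ᵐ[MeasureTheory.volume.restrict (Set.Ioc (0:ℝ) L)] g := by
      refine (MeasureTheory.ae_restrict_iff' measurableSet_Ioc).mpr
        (MeasureTheory.ae_of_all _ ?_)
      intro s hs
      have hs' : s ∈ Set.Icc (0:ℝ) L := ⟨hs.1.le, hs.2⟩
      have h2 := abs_real_inner_le_norm (u s) z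
      rw [hnorm s hs', one_mul] at h2
      simp only [hgdef, Pi.zero_apply]
      nlinarith [sq_abs (⟪u s, z⟫ : ℝ), abs_nonneg (⟪u s, z⟫ : ℝ), norm_nonneg z]
    have hae := (intervalIntegral.integral_eq_zero_iff_of_le_of_nonneg_ae
      h0L hgnonneg hgInt).mp hgzero
    have hae' : g =ᵐ[MeasureTheory.volume.restrict (Set.Icc (0:ℝ) L)] 0 := by
      rwa [MeasureTheory.Measure.restrict_congr_set MeasureTheory.Ioc_ae_eq_Icc] at hae
    have hcg : ContinuousOn g (Set.Icc (0:ℝ) L) :=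
      continuousOn_const.sub ((hcontf z).mul (hcontf z))
    have hg0 : ∀ s ∈ Set.Icc (0:ℝ) L, g s = 0 := by
      have hsub : Set.Icc (0:ℝ) L ⊆ closure (interior (Set.Icc (0:ℝ) L)) := by
        rw [interior_Icc, closure_Ioo hL.ne]
      exact fun s hs =>
        MeasureTheory.Measure.eqOn_of_ae_eq hae' hcg continuousOn_const hsub hs
    have hsq : ∀ s ∈ Set.Icc (0:ℝ) L, ⟪u s, z⟫ * ⟪u s, z⟫ = ‖z‖ ^ 2 := by
      intro s hs
      have := hg0 s hs
      simp only [hgdef] at this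
      linarith
    have habs : ∀ s ∈ Set.Icc (0:ℝ) L, |(⟪u s, z⟫ : ℝ)| = ‖z‖ := by
      intro s hs
      have h1 := hsq s hs
      nlinarith [abs_nonneg (⟪u s, z⟫ : ℝ), sq_abs (⟪u s, z⟫ : ℝ), norm_nonneg z]
    have h0mem : (0:ℝ) ∈ Set.Icc (0:ℝ) L := ⟨le_rfl, h0L⟩
    have hfc := sign_const_aux (hcontf z)
      (fun s hs h => by have := habs s hs; rw [h, abs_zero] at this; linarith)
      (fun s hs => by rw [habs s hs, habs 0 h0mem])
    have key : ∀ s ∈ Set.Icc (0:ℝ) L, u s = (⟪u s, z⟫ / ‖z‖ ^ 2) • z := by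
      intro s hs
      have hnz : ‖u s - (⟪u s, z⟫ / ‖z‖ ^ 2) • z‖ ^ 2 = 0 := by
        rw [norm_sub_sq_real, real_inner_smul_right, norm_smul, hnorm s hs]
        have h1 := hsq s hs
        have hz2 : (0:ℝ) < ‖z‖ ^ 2 := by positivity
        rw [mul_pow, Real.norm_eq_abs, sq_abs]
        field_simp
        nlinarith [hsq s hs]
      have := pow_eq_zero_iff (n := 2) (by norm_num) |>.mp hnz
      rw [norm_eq_zero, sub_eq_zero] at this
      exact this
    intro s hs
    rw [key s hs, key 0 h0mem, hfc s hs]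
  -- constant implies eigenvalue
  have const_to_eig : (∀ s ∈ Set.Icc (0:ℝ) L, u s = u 0) →
      (∃ z : H, z ≠ 0 ∧ Γ z = L • z) := by
    intro hconst
    have h0mem : (0:ℝ) ∈ Set.Icc (0:ℝ) L := ⟨le_rfl, h0L⟩
    have hu0 : ‖u 0‖ = 1 := hnorm 0 h0mem
    have hu0ne : u 0 ≠ 0 := by
      intro h; rw [h, norm_zero] at hu0; norm_num at hu0
    refine ⟨u 0, hu0ne, ?_⟩
    rw [hΓ]
    rw [intervalIntegral.integral_congr (g := fun _ => u 0) ?_]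
    · simp
    · intro s hs
      rw [huIcc] at hs
      simp only
      rw [hconst s hs, real_inner_self_eq_norm_sq, hu0]
      norm_num
  -- constant implies one-dimensional
  have const_to_dim : (∀ s ∈ Set.Icc (0:ℝ) L, u s = u 0) →
      ∃ W : Submodule ℝ H, Module.rank ℝ W = 1 ∧ ∀ s ∈ Set.Icc (0:ℝ) L, u s ∈ W := by
    intro hconst
    have h0mem : (0:ℝ) ∈ Set.Icc (0:ℝ) L := ⟨le_rfl, h0L⟩
    have hu0 : ‖u 0‖ = 1 := hnorm 0 h0mem
    have hu0ne : u 0 ≠ 0 := by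
      intro h; rw [h, norm_zero] at hu0; norm_num at hu0
    refine ⟨Submodule.span ℝ {u 0}, ?_,
      fun s hs => by rw [hconst s hs]; exact Submodule.mem_span_singleton_self _⟩
    rw [rank_submodule_eq_one_iff]
    exact ⟨u 0, Submodule.mem_span_singleton_self _, hu0ne, le_rfl⟩
  -- one-dimensional implies constant
  have dim_to_const : (∃ W : Submodule ℝ H, Module.rank ℝ W = 1 ∧
      ∀ s ∈ Set.Icc (0:ℝ) L, u s ∈ W) → ∀ s ∈ Set.Icc (0:ℝ) L, u s = u 0 := by
    rintro ⟨W, hW, hmem⟩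
    obtain ⟨v, _, hle⟩ := (rank_submodule_le_one_iff W).mp hW.le
    have h0mem : (0:ℝ) ∈ Set.Icc (0:ℝ) L := ⟨le_rfl, h0L⟩
    have hrep : ∀ s ∈ Set.Icc (0:ℝ) L, ∃ c : ℝ, u s = c • v := by
      intro s hs
      obtain ⟨c, hc⟩ := Submodule.mem_span_singleton.mp (hle (hmem s hs))
      exact ⟨c, hc.symm⟩
    have hvne : v ≠ 0 := by
      obtain ⟨c, hc⟩ := hrep 0 h0mem
      intro h
      rw [h, smul_zero] at hc
      have h1 := hnorm 0 h0mem
      rw [hc, norm_zero] at h1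
      norm_num at h1
    have hvpos : (0:ℝ) < ‖v‖ := norm_pos_iff.mpr hvne
    have habs : ∀ s ∈ Set.Icc (0:ℝ) L, |(⟪u s, v⟫ : ℝ)| = ‖v‖ := by
      intro s hs
      obtain ⟨c, hc⟩ := hrep s hs
      have h1 := hnorm s hs
      rw [hc, norm_smul, Real.norm_eq_abs] at h1
      rw [hc, real_inner_smul_left, real_inner_self_eq_norm_sq, abs_mul,
        abs_of_nonneg (by positivity : (0:ℝ) ≤ ‖v‖ ^ 2)]
      nlinarith [abs_nonneg c]
    have hcontv : ContinuousOn (fun s => (⟪u s, v⟫ : ℝ)) (Set.Icc 0 L) :=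
      hu.inner continuousOn_const
    have hfc := sign_const_aux hcontv
      (fun s hs h => by have := habs s hs; rw [h, abs_zero] at this; linarith)
      (fun s hs => by rw [habs s hs, habs 0 h0mem])
    intro s hs
    obtain ⟨c, hc⟩ := hrep s hs
    obtain ⟨c0, hc0⟩ := hrep 0 h0mem
    have e1 : (⟪u s, v⟫ : ℝ) = c * ‖v‖ ^ 2 := by
      rw [hc, real_inner_smul_left, real_inner_self_eq_norm_sq]
    have e2 : (⟪u 0, v⟫ : ℝ) = c0 * ‖v‖ ^ 2 := by
      rw [hc0, real_inner_smul_left, real_inner_self_eq_norm_sq]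
    have hcc : c = c0 := by
      have h3 := hfc s hs
      rw [e1, e2] at h3
      have hv2 : (0:ℝ) < ‖v‖ ^ 2 := by positivity
      exact mul_right_cancel₀ hv2.ne' h3
    rw [hc, hc0, hcc]
  refine ⟨hlin, ⟨L, hbdd⟩, hsym, hquad,
    ⟨fun h => const_to_dim (eig_to_const h), fun h => const_to_eig (dim_to_const h)⟩,
    ⟨eig_to_const, const_to_eig⟩⟩
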